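/- Under the same compatibility assumptions, for all e, f ∈ ℤⁿ: Λ(B̃e, B̃f) = ⟨e, f⟩ − ⟨f, e⟩. -/

import Mathlib

open Matrix

/-- Lam(B̃e, B̃f) = ⟨e,f⟩ − ⟨f,e⟩. -/
theorem stmt2 (m n : ℕ) (hmn : n ≤ m)
    (Lam : Matrix (Fin m) (Fin m) ℤ)
    (Rt Bt It : Matrix (Fin m) (Fin n) ℤ)
    (R : Matrix (Fin n) (Fin n) ℤ)
    (hIt : It = Matrix.of fun (i : Fin m) (j : Fin n) => if (i : ℕ) = (j : ℕ) then (1 : ℤ) else 0)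
    (hLam : Lamᵀ = -Lam)
    (hB : Lam * Bt = -It)
    (hR : ∀ i j : Fin n, R i j = Rt (Fin.castLE hmn i) j)
    (hBR : ∀ i j : Fin n, Bt (Fin.castLE hmn i) j
        = Rt (Fin.castLE hmn j) i - Rt (Fin.castLE hmn i) j)
    (ev fv : Fin n → ℤ) :
    (Bt.mulVec ev) ⬝ᵥ Lam.mulVec (Bt.mulVec fv)
      = ev ⬝ᵥ (1 - R).mulVec fv - fv ⬝ᵥ (1 - R).mulVec ev := by
  have key : Itᵀ * Bt = Rᵀ - R := by
    ext i j
    have h1 : ∀ k : Fin m,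
        Itᵀ i k * Bt k j = if k = Fin.castLE hmn i then Bt k j else 0 := by
      intro k
      by_cases h : k = Fin.castLE hmn i
      · subst h; simp [hIt]
      · have : ¬ ((k : ℕ) = (i : ℕ)) := by
          intro hc
          exact h (Fin.ext (by simpa using hc))
        simp [hIt, transpose_apply, this, h]
    rw [Matrix.mul_apply]
    rw [Finset.sum_congr rfl (fun k _ => h1 k)]
    rw [Finset.sum_ite_eq' (Finset.univ) (Fin.castLE hmn i) (fun k => Bt k j)]
    simp [hBR i j, hR, Matrix.sub_apply, transpose_apply]
  have hLB : Lam.mulVec (Bt.mulVec fv) = (-It).mulVec fv := by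
    rw [Matrix.mulVec_mulVec, hB]
  rw [hLB]
  have step : (Bt.mulVec ev) ⬝ᵥ (-It).mulVec fv
      = -(((Itᵀ * Bt).mulVec ev) ⬝ᵥ fv) := by
    rw [Matrix.neg_mulVec, dotProduct_neg]
    congr 1
    rw [Matrix.dotProduct_mulVec, ← Matrix.mulVec_transpose]
    rw [Matrix.mulVec_mulVec]
  rw [step, key]
  have hsub : (Rᵀ - R).mulVec ev = Rᵀ.mulVec ev - R.mulVec ev := by
    rw [Matrix.sub_mulVec]
  rw [hsub]
  have h2 : (Rᵀ.mulVec ev) ⬝ᵥ fv = ev ⬝ᵥ R.mulVec fv := by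
    rw [Matrix.mulVec_transpose, ← Matrix.dotProduct_mulVec, dotProduct_comm]
  have h3 : (R.mulVec ev) ⬝ᵥ fv = fv ⬝ᵥ R.mulVec ev := by
    rw [dotProduct_comm]
  rw [sub_dotProduct, h2, h3]
  have e1 : ev ⬝ᵥ (1 - R).mulVec fv = ev ⬝ᵥ fv - ev ⬝ᵥ R.mulVec fv := by
    rw [Matrix.sub_mulVec, dotProduct_sub, Matrix.one_mulVec]
  have e2 : fv ⬝ᵥ (1 - R).mulVec ev = fv ⬝ᵥ ev - fv ⬝ᵥ R.mulVec ev := by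
    rw [Matrix.sub_mulVec, dotProduct_sub, Matrix.one_mulVec]
  rw [e1, e2, dotProduct_comm ev fv]
  ring
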